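/- For every positive integer n, the identity ∑_{k=1}^n (-1)^k * C(n,k) * C(n+k,k) * (1/k) = -2 * H_n holds, where H_n = ∑_{j=1}^n 1/j is the n-th harmonic number. -/

import Mathlib

open Finset

lemma key (M : ℕ) (x : ℚ) (hx : 0 < x) :
    ∑ m ∈ range (M+1), (-1:ℚ)^m * (M.choose m) / (x + m)
      = M.factorial / ∏ i ∈ range (M+1), (x + i) := by
  induction M generalizing x with
  | zero => simp
  | succ M ih =>
    have hP : (0:ℚ) < ∏ i ∈ range (M+1), (x + i) := by
      apply Finset.prod_pos; intro i _; positivity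
    have hQ : (0:ℚ) < ∏ i ∈ range (M+1), ((x+1) + i) := by
      apply Finset.prod_pos; intro i _; positivity
    have hR : (0:ℚ) < ∏ i ∈ range (M+2), (x + i) := by
      apply Finset.prod_pos; intro i _; positivity
    have step : ∀ i ∈ range (M+1),
        (-1:ℚ)^(i+1) * (((M+1).choose (i+1) : ℕ)) / (x + ((i+1 : ℕ):ℚ))
          = (-1:ℚ)^(i+1) * ((M.choose (i+1) : ℕ)) / (x + ((i+1 : ℕ):ℚ))
            - (-1:ℚ)^i * ((M.choose i : ℕ)) / ((x+1) + (i:ℚ)) := by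
      intro i _
      rw [Nat.choose_succ_succ]
      have d1 : x + ((i+1 : ℕ):ℚ) ≠ 0 := by positivity
      have d2 : (x+1) + (i:ℚ) ≠ 0 := by positivity
      push_cast at d1 ⊢
      field_simp
      ring
    rw [Finset.sum_range_succ']
    rw [Finset.sum_congr rfl step, Finset.sum_sub_distrib]
    have hA : (∑ i ∈ range (M+1), (-1:ℚ)^(i+1) * ((M.choose (i+1) : ℕ)) / (x + ((i+1 : ℕ):ℚ)))
        + (-1:ℚ)^0 * ((M.choose 0 : ℕ)) / (x + ((0:ℕ):ℚ))
        = ∑ m ∈ range (M+2), (-1:ℚ)^m * (M.choose m) / (x + m) :=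
      (Finset.sum_range_succ' (fun m => (-1:ℚ)^m * (M.choose m) / (x + m)) (M+1)).symm
    have hA2 : ∑ m ∈ range (M+2), (-1:ℚ)^m * (M.choose m) / (x + m)
        = M.factorial / ∏ i ∈ range (M+1), (x + i) := by
      rw [Finset.sum_range_succ, ih x hx, Nat.choose_succ_self]
      simp
    have hSQ : ∑ m ∈ range (M+1), (-1:ℚ)^m * (M.choose m) / ((x+1) + m)
        = M.factorial / ∏ i ∈ range (M+1), ((x+1) + i) := ih (x+1) (by positivity)
    rw [hSQ]
    have hRP : ∏ i ∈ range (M+2), (x + i) = (∏ i ∈ range (M+1), (x + i)) * (x + ((M+1:ℕ):ℚ)) :=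
      Finset.prod_range_succ _ _
    have hRQ : ∏ i ∈ range (M+2), (x + i) = x * ∏ i ∈ range (M+1), ((x+1) + i) := by
      rw [Finset.prod_range_succ']
      have e : ∀ i ∈ range (M+1), x + ((i+1:ℕ):ℚ) = (x+1)+(i:ℚ) := fun i _ => by push_cast; ring
      rw [Finset.prod_congr rfl e]
      push_cast
      ring
    have goal2 : (M.factorial:ℚ) / ∏ i ∈ range (M+1), (x + i)
        - (M.factorial:ℚ) / ∏ i ∈ range (M+1), ((x+1) + i)
        = ((M+1).factorial : ℚ) / ∏ i ∈ range (M+2), (x + i) := by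
      rw [div_sub_div _ _ hP.ne' hQ.ne', div_eq_div_iff (mul_pos hP hQ).ne' hR.ne']
      push_cast [Nat.factorial_succ] at hRP ⊢
      linear_combination ((M.factorial:ℚ) * (∏ i ∈ range (M+1), ((x+1) + i))) * hRP
        - ((∏ i ∈ range (M+1), (x + i)) * (M.factorial:ℚ)) * hRQ
    calc ∑ i ∈ range (M+1), (-1:ℚ)^(i+1) * ((M.choose (i+1):ℕ)) / (x + ((i+1:ℕ):ℚ))
          - (M.factorial:ℚ) / ∏ i ∈ range (M+1), ((x+1) + i)
          + (-1:ℚ)^0 * (((M+1).choose 0 : ℕ)) / (x + ((0:ℕ):ℚ))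
        = (∑ i ∈ range (M+1), (-1:ℚ)^(i+1) * ((M.choose (i+1):ℕ)) / (x + ((i+1:ℕ):ℚ))
            + (-1:ℚ)^0 * ((M.choose 0 : ℕ)) / (x + ((0:ℕ):ℚ)))
          - (M.factorial:ℚ) / ∏ i ∈ range (M+1), ((x+1) + i) := by
          simp; ring
      _ = (M.factorial:ℚ) / ∏ i ∈ range (M+1), (x + i)
          - (M.factorial:ℚ) / ∏ i ∈ range (M+1), ((x+1) + i) := by rw [hA, hA2]
      _ = ((M+1).factorial : ℚ) / ∏ i ∈ range (M+2), (x + i) := goal2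

lemma lemA (n : ℕ) : ∑ k ∈ range (n+1), (-1:ℚ)^k * (n.choose k) / k
    = - ∑ j ∈ range (n+1), (1/(j:ℚ)) := by
  induction n with
  | zero => simp
  | succ n ih =>
    have halt : ∑ i ∈ range (n+2), (-1:ℚ)^i * ((n+1).choose i) = 0 := by
      have h := Int.alternating_sum_range_choose (n := n+1)
      rw [if_neg (Nat.succ_ne_zero n)] at h
      exact_mod_cast congrArg (fun z : ℤ => (z : ℚ)) h
    have halt' : ∑ i ∈ range (n+1), (-1:ℚ)^(i+1) * ((n+1).choose (i+1)) = -1 := by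
      have := Finset.sum_range_succ' (fun i => (-1:ℚ)^i * ((n+1).choose i)) (n+1)
      rw [halt] at this
      simp at this
      linarith
    have step : ∀ i ∈ range (n+1),
        (-1:ℚ)^(i+1) * (((n+1).choose (i+1) : ℕ)) / ((i+1:ℕ):ℚ)
          = (-1:ℚ)^(i+1) * ((n.choose (i+1) : ℕ)) / ((i+1:ℕ):ℚ)
            + ((-1:ℚ)^(i+1) * (((n+1).choose (i+1) : ℕ))) / ((n:ℚ)+1) := by
      intro i _
      have hmul : ((n:ℚ)+1) * (n.choose i) = ((n+1).choose (i+1)) * ((i:ℚ)+1) := by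
        exact_mod_cast congrArg (fun z : ℕ => (z : ℚ)) (Nat.add_one_mul_choose_eq n i)
      have d1 : ((i:ℚ)+1) ≠ 0 := by positivity
      have d2 : (n:ℚ)+1 ≠ 0 := by positivity
      have key2 : (-1:ℚ)^(i+1) * ((n.choose i : ℕ)) / ((i:ℚ)+1)
          = (-1:ℚ)^(i+1) * (((n+1).choose (i+1):ℕ)) / ((n:ℚ)+1) := by
        rw [div_eq_div_iff d1 d2]
        linear_combination ((-1:ℚ)^(i+1)) * hmul
      conv_lhs => rw [Nat.choose_succ_succ]
      push_cast
      rw [show ((-1:ℚ)^(i+1) * (((n.choose i : ℕ):ℚ) + ((n.choose (i+1) : ℕ):ℚ)) / ((i:ℚ)+1))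
          = (-1:ℚ)^(i+1) * ((n.choose (i+1) : ℕ)) / ((i:ℚ)+1)
            + (-1:ℚ)^(i+1) * ((n.choose i : ℕ)) / ((i:ℚ)+1) from by ring, key2]
    rw [Finset.sum_range_succ']
    rw [Finset.sum_congr rfl step, Finset.sum_add_distrib]
    have hA : (∑ i ∈ range (n+1), (-1:ℚ)^(i+1) * ((n.choose (i+1) : ℕ)) / ((i+1:ℕ):ℚ))
        + (-1:ℚ)^0 * ((n.choose 0 : ℕ)) / ((0:ℕ):ℚ)
        = ∑ k ∈ range (n+2), (-1:ℚ)^k * (n.choose k) / k :=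
      (Finset.sum_range_succ' (fun k => (-1:ℚ)^k * (n.choose k) / k) (n+1)).symm
    have hA2 : ∑ k ∈ range (n+2), (-1:ℚ)^k * (n.choose k) / k
        = - ∑ j ∈ range (n+1), (1/(j:ℚ)) := by
      rw [Finset.sum_range_succ, ih, Nat.choose_succ_self]
      simp
    have hB : ∑ i ∈ range (n+1), ((-1:ℚ)^(i+1) * (((n+1).choose (i+1) : ℕ))) / ((n:ℚ)+1)
        = -1 / ((n:ℚ)+1) := by
      rw [← Finset.sum_div, halt']
    rw [hB, Finset.sum_range_succ _ (n+1)]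
    have hS : ∑ i ∈ range (n+1), (-1:ℚ)^(i+1) * ((n.choose (i+1) : ℕ)) / ((i+1:ℕ):ℚ)
        = - ∑ j ∈ range (n+1), (1/(j:ℚ)) := by
      rw [hA2] at hA
      simpa using hA
    rw [hS]
    push_cast
    simp
    ring

lemma chchQ (n j m : ℕ) (h : j + m ≤ n) :
    ((n.choose (j+m) : ℚ)) * ((j+m).choose j) = (n.choose j) * ((n-j).choose m) := by
  have hj : j ≤ n := le_trans (Nat.le_add_right _ _) h
  have hm : m ≤ n - j := by omega
  rw [Nat.cast_choose ℚ h, Nat.cast_choose ℚ hj, Nat.cast_choose ℚ (Nat.le_add_right j m),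
    Nat.cast_choose ℚ hm]
  have e1 : n - (j+m) = n - j - m := by omega
  have e2 : j + m - j = m := by omega
  rw [e1, e2]
  have f1 : ((j+m).factorial : ℚ) ≠ 0 := Nat.cast_ne_zero.mpr (Nat.factorial_ne_zero _)
  have f2 : ((n-j-m).factorial : ℚ) ≠ 0 := Nat.cast_ne_zero.mpr (Nat.factorial_ne_zero _)
  have f3 : (j.factorial : ℚ) ≠ 0 := Nat.cast_ne_zero.mpr (Nat.factorial_ne_zero _)
  have f4 : (m.factorial : ℚ) ≠ 0 := Nat.cast_ne_zero.mpr (Nat.factorial_ne_zero _)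
  have f5 : ((n-j).factorial : ℚ) ≠ 0 := Nat.cast_ne_zero.mpr (Nat.factorial_ne_zero _)
  field_simp

lemma prodfact (j M : ℕ) (hj : 1 ≤ j) :
    (((j-1).factorial : ℚ)) * ∏ i ∈ range (M+1), ((j:ℚ)+i) = ((j+M).factorial : ℚ) := by
  induction M with
  | zero =>
    simp only [zero_add, Finset.prod_range_one, Nat.cast_zero, add_zero]
    have := Nat.mul_factorial_pred (show j ≠ 0 by omega)
    push_cast [← this]
    ring
  | succ M ih =>
    rw [Finset.prod_range_succ, ← mul_assoc, ih]
    have : j + (M+1) = (j + M) + 1 := by omega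
    rw [this, Nat.factorial_succ]
    push_cast
    ring

lemma lemB (n j : ℕ) (hj1 : 1 ≤ j) (hjn : j ≤ n) :
    ∑ k ∈ Icc j n, (-1:ℚ)^k * (n.choose k) * (k.choose j) / k = (-1:ℚ)^j / j := by
  rw [show Icc j n = Ico j (n+1) from by rw [Finset.Ico_add_one_right_eq_Icc], Finset.sum_Ico_eq_sum_range]
  have hM : n + 1 - j = (n-j) + 1 := by omega
  rw [hM]
  have hjQ : (0:ℚ) < j := by exact_mod_cast hj1
  have hstep : ∀ m ∈ range ((n-j)+1),
      (-1:ℚ)^(j+m) * (n.choose (j+m)) * (((j+m).choose j : ℕ)) / ((j+m:ℕ):ℚ)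
        = ((-1:ℚ)^j * (n.choose j)) * ((-1:ℚ)^m * ((n-j).choose m) / ((j:ℚ)+m)) := by
    intro m hm
    have hle : j + m ≤ n := by
      simp only [Finset.mem_range] at hm; omega
    have hc := chchQ n j m hle
    calc (-1:ℚ)^(j+m) * (n.choose (j+m)) * (((j+m).choose j : ℕ)) / ((j+m:ℕ):ℚ)
        = ((-1:ℚ)^j * (-1:ℚ)^m) * ((n.choose (j+m) : ℚ) * ((j+m).choose j)) / ((j:ℚ)+m) := by
          push_cast; rw [pow_add]; ring
      _ = _ := by rw [hc]; ring
  rw [Finset.sum_congr rfl hstep, ← Finset.mul_sum, key (n-j) j hjQ]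
  have hprod := prodfact j (n-j) hj1
  rw [show j + (n-j) = n from by omega] at hprod
  have hppos : (0:ℚ) < ∏ i ∈ range ((n-j)+1), ((j:ℚ)+i) := by
    apply Finset.prod_pos; intro i _; positivity
  have hC : (n.choose j : ℚ) = n.factorial / (j.factorial * (n-j).factorial) :=
    Nat.cast_choose ℚ hjn
  have hjf : (j.factorial : ℚ) = j * (j-1).factorial := by
    have := Nat.mul_factorial_pred (show j ≠ 0 by omega)
    exact_mod_cast this.symm
  have f2 : ((n-j).factorial : ℚ) ≠ 0 := Nat.cast_ne_zero.mpr (Nat.factorial_ne_zero _)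
  have f3 : ((j-1).factorial : ℚ) ≠ 0 := Nat.cast_ne_zero.mpr (Nat.factorial_ne_zero _)
  rw [hC, hjf]
  field_simp
  linear_combination -hprod

theorem stmt_0 (n : ℕ) (hn : 0 < n) :
    ∑ k ∈ Finset.Icc 1 n,
      ((-1 : ℚ)^k * (n.choose k) * ((n + k).choose k) * (1 / k))
      = -2 * ∑ j ∈ Finset.Icc 1 n, (1 / j : ℚ) := by
  have hins : range (n+1) = insert 0 (Finset.Icc 1 n) := by
    ext x; simp [Finset.mem_range, Finset.mem_Icc]; omega
  have h0notin : (0:ℕ) ∉ Finset.Icc 1 n := by simp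
  -- Icc version of lemA
  have lemA' : ∑ k ∈ Finset.Icc 1 n, (-1:ℚ)^k * (n.choose k) / k
      = - ∑ j ∈ Finset.Icc 1 n, (1/(j:ℚ)) := by
    have h1 := lemA n
    rw [hins, Finset.sum_insert h0notin, Finset.sum_insert h0notin] at h1
    simpa using h1
  -- Vandermonde expansion
  have hV : ∀ k ∈ Finset.Icc 1 n, ((n+k).choose k : ℚ)
      = ∑ j ∈ range (n+1), ((n.choose j : ℕ) : ℚ) * (k.choose j) := by
    intro k hk
    simp only [Finset.mem_Icc] at hk
    have h1 : (n+k).choose k = ∑ i ∈ range (k+1), n.choose i * k.choose i := by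
      rw [Nat.add_choose_eq, Finset.Nat.sum_antidiagonal_eq_sum_range_succ_mk]
      exact Finset.sum_congr rfl fun i hi => by
        simp only [Finset.mem_range] at hi
        show n.choose i * k.choose (k-i) = n.choose i * k.choose i
        rw [Nat.choose_symm (by omega)]
    rw [h1]
    have h2 : ∑ i ∈ range (k+1), n.choose i * k.choose i
        = ∑ i ∈ range (n+1), n.choose i * k.choose i := by
      apply Finset.sum_subset
      · intro x hx
        simp only [Finset.mem_range] at hx ⊢
        omega
      · intro x _ hx
        simp only [Finset.mem_range, not_lt] at hx
        rw [Nat.choose_eq_zero_of_lt (show k < x by omega)]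
        ring
    rw [h2]
    push_cast
    rfl
  calc ∑ k ∈ Finset.Icc 1 n, ((-1 : ℚ)^k * (n.choose k) * ((n + k).choose k) * (1 / k))
      = ∑ k ∈ Finset.Icc 1 n, ∑ j ∈ range (n+1),
          ((n.choose j : ℕ):ℚ) * ((-1:ℚ)^k * (n.choose k) * (k.choose j) / k) := by
        refine Finset.sum_congr rfl fun k hk => ?_
        rw [show ((-1 : ℚ)^k * (n.choose k) * ((n + k).choose k) * (1 / k))
            = ((n+k).choose k : ℚ) * ((-1:ℚ)^k * (n.choose k) / k) from by ring,
          hV k hk, Finset.sum_mul]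
        exact Finset.sum_congr rfl fun j _ => by ring
    _ = ∑ j ∈ range (n+1), ((n.choose j : ℕ):ℚ)
          * ∑ k ∈ Finset.Icc 1 n, ((-1:ℚ)^k * (n.choose k) * (k.choose j) / k) := by
        rw [Finset.sum_comm]
        exact Finset.sum_congr rfl fun j _ => by rw [Finset.mul_sum]
    _ = -2 * ∑ j ∈ Finset.Icc 1 n, (1 / j : ℚ) := by
        rw [hins, Finset.sum_insert h0notin]
        have hz : ∀ j ∈ Finset.Icc 1 n, ((n.choose j : ℕ):ℚ)
            * ∑ k ∈ Finset.Icc 1 n, ((-1:ℚ)^k * (n.choose k) * (k.choose j) / k)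
            = (-1:ℚ)^j * (n.choose j) / j := by
          intro j hj
          simp only [Finset.mem_Icc] at hj
          have hsub : ∑ k ∈ Finset.Icc 1 n, ((-1:ℚ)^k * (n.choose k) * (k.choose j) / k)
              = ∑ k ∈ Finset.Icc j n, ((-1:ℚ)^k * (n.choose k) * (k.choose j) / k) := by
            symm
            apply Finset.sum_subset
            · intro x hx
              simp only [Finset.mem_Icc] at hx ⊢
              omega
            · intro x hx hxn
              simp only [Finset.mem_Icc, not_and, not_le] at hx hxn
              have hxj : x < j := by
                rcases Nat.lt_or_ge x j with h|h
                · exact h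
                · exact absurd hx.2 (Nat.not_le.mpr (hxn h))
              rw [Nat.choose_eq_zero_of_lt hxj]
              simp
          rw [hsub, lemB n j hj.1 hj.2]
          ring
        rw [Finset.sum_congr rfl hz]
        have h00 : ((n.choose 0 : ℕ):ℚ)
            * ∑ k ∈ Finset.Icc 1 n, ((-1:ℚ)^k * (n.choose k) * (k.choose 0) / k)
            = - ∑ j ∈ Finset.Icc 1 n, (1/(j:ℚ)) := by
          simp only [Nat.choose_zero_right, Nat.cast_one, one_mul, mul_one]
          exact lemA'
        rw [h00, lemA']
        ring
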